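/- Let r : ℝ → ℝ² be a C² curve and let aⁱ, aʲ, aⁱⱼ, aʲᵢ : ℝ → ℝ be differentiable functions. Fix t ∈ ℝ and suppose the vectors r'(t) and r''(t) are linearly independent. Then the equality of points (r + aʲ·r' + aⁱⱼ·(r + aʲ·r')')(t) = (r + aⁱ·r' + aʲᵢ·(r + aⁱ·r')')(t) holds if and only if the two scalar equations aʲ(t)·aⁱⱼ(t) = aⁱ(t)·aʲᵢ(t) and (1 + (aʲ)'(t))·aⁱⱼ(t) + aʲ(t) = (1 + (aⁱ)'(t))·aʲᵢ(t) + aⁱ(t) hold. -/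

import Mathlib

/-- For a C² planar curve `r` with `r'(t), r''(t)` linearly independent,
the compatibility of the tangential map at `t` is equivalent to the two scalar
(aa)-equations at `t`. -/
theorem tangential_map_compatibility_iff_aa
    (r : ℝ → ℝ × ℝ) (ai aj aij aji : ℝ → ℝ)
    (hr : ContDiff ℝ 2 r)
    (hai : Differentiable ℝ ai) (haj : Differentiable ℝ aj)
    (haij : Differentiable ℝ aij) (haji : Differentiable ℝ aji)
    (t : ℝ)
    (hind : LinearIndependent ℝ ![deriv r t, deriv (deriv r) t]) :
    (r t + aj t • deriv r t
        + aij t • deriv (fun s => r s + aj s • deriv r s) t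
      = r t + ai t • deriv r t
        + aji t • deriv (fun s => r s + ai s • deriv r s) t)
    ↔ (aj t * aij t = ai t * aji t ∧
        (1 + deriv aj t) * aij t + aj t = (1 + deriv ai t) * aji t + ai t) := by
  have hr' : ContDiff ℝ ((1:ℕ)+1) r := by exact_mod_cast hr
  have hdr : Differentiable ℝ (deriv r) :=
    (contDiff_succ_iff_deriv.mp hr').2.2.differentiable (by simp)
  have hrd : Differentiable ℝ r := hr.differentiable (by simp)
  have hdj : deriv (fun s => r s + aj s • deriv r s) t
      = deriv r t + (deriv aj t • deriv r t + aj t • deriv (deriv r) t) := by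
    rw [deriv_fun_add (g := fun s => aj s • deriv r s) (hrd t) ((haj t).smul (hdr t)), deriv_fun_smul (haj t) (hdr t)]; module
  have hdi : deriv (fun s => r s + ai s • deriv r s) t
      = deriv r t + (deriv ai t • deriv r t + ai t • deriv (deriv r) t) := by
    rw [deriv_fun_add (g := fun s => ai s • deriv r s) (hrd t) ((hai t).smul (hdr t)), deriv_fun_smul (hai t) (hdr t)]; module
  rw [hdj, hdi]
  constructor
  · intro h
    have key : ((1 + deriv aj t) * aij t + aj t - ((1 + deriv ai t) * aji t + ai t))
          • deriv r t + (aj t * aij t - ai t * aji t) • deriv (deriv r) t = 0 := by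
      linear_combination (norm := module) h
    obtain ⟨h1, h2⟩ := LinearIndependent.pair_iff.mp hind _ _ key
    constructor <;> linarith
  · rintro ⟨h1, h2⟩
    linear_combination (norm := module) h2 • deriv r t + h1 • deriv (deriv r) t
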